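/- For every parameterized item x = (r, d, i, j, ρ) with ρ ∈ ⟨f₁,…,f_{d+1}⟩ (the parameter-hull invariant for the rule r = N_{f_{k+1}} → X₁^{f₁}…X_k^{f_k} with 0 ≤ d ≤ k), the induced set of ordinary items ⟦x⟧ is nonempty. -/

import Mathlib

/-- Hull membership: `ρ` has length `2*u` and for each `i < u`, the partial function
`f i` (modeling `f_{i+1} : Φ^(2i+1) ⇀ Φ`) is defined at the first `2i+1` entries of `ρ`
with value `ρ_{2i+1}`. -/
def InHull {Φ : Type} (f : ℕ → List Φ → Option Φ) (u : ℕ) (ρ : List Φ) : Prop :=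
  ρ.length = 2 * u ∧ ∀ i < u, ρ[(2 * i + 1)]? = f i (ρ.take (2 * i + 1))

/-- A parameterized rule `N_{f_{k+1}} → X₁^{f₁} … X_k^{f_k}`; symbols are nonterminals
(`Sum.inl`) or terminals (`Sum.inr`), and `f i` models the partial function `f_{i+1}`. -/
structure ParamRule (NT TM Φ : Type) where
  lhs : NT
  rhs : List (NT ⊕ TM)
  f : ℕ → List Φ → Option Φ

/-- A rule of the induced (ordinary) grammar: `lhs^inP_outP → rhs [⊥]`, where the
trailing failure symbol `⊥` is recorded by the flag `fail`, and `isTop` marks the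
special rules `⊤ → S^{φstart}_β` of the induced grammar. -/
structure IndRule (NT TM Φ : Type) where
  isTop : Bool
  lhs : NT
  inP : Φ
  outP : Φ
  rhs : List ((NT ⊕ TM) × Φ × Φ)
  fail : Bool

/-- `q` is one of the rules induced by the parameterized rule `r`. -/
def InducedBy {NT TM Φ : Type} (r : ParamRule NT TM Φ) (q : IndRule NT TM Φ) : Prop :=
  q.isTop = false ∧ q.lhs = r.lhs ∧
  ((q.fail = false ∧ q.rhs.length = r.rhs.length ∧
      ∃ ρ : List Φ, InHull r.f (r.rhs.length + 1) ρ ∧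
        ρ[0]? = some q.inP ∧ ρ[(2 * r.rhs.length + 1)]? = some q.outP ∧
        ∀ i < r.rhs.length, ∃ X a b,
          r.rhs[i]? = some X ∧ ρ[(2 * i + 1)]? = some a ∧
          ρ[(2 * i + 2)]? = some b ∧ q.rhs[i]? = some (X, a, b)) ∨
   (q.fail = true ∧ ∃ h, 1 ≤ h ∧ h ≤ r.rhs.length ∧ q.rhs.length = h ∧
      ∃ ρ : List Φ, InHull r.f h ρ ∧ ρ[0]? = some q.inP ∧
        (∀ i, i + 1 < h → ∃ X a b,
          r.rhs[i]? = some X ∧ ρ[(2 * i + 1)]? = some a ∧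
          ρ[(2 * i + 2)]? = some b ∧ q.rhs[i]? = some (X, a, b)) ∧
        ∃ X a βh, r.rhs[(h - 1)]? = some X ∧ ρ[(2 * h - 1)]? = some a ∧
          q.rhs[(h - 1)]? = some (X, a, βh) ∧ r.f h (ρ ++ [βh]) = none))

/-- A parameterized (PELLA) item `(r, d, i, j, ρ)`. -/
structure PItem (NT TM Φ : Type) where
  r : ParamRule NT TM Φ
  d : ℕ
  i : ℕ
  j : ℕ
  ρ : List Φ

/-- An ordinary (ELLA) Earley item `(q, d, i, j)` of the induced grammar. -/
structure EItem (NT TM Φ : Type) where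
  rule : IndRule NT TM Φ
  d : ℕ
  i : ℕ
  j : ℕ

/-- The invariant demanded of parameterized items: `d ≤ k` and `ρ ∈ ⟨f₁,…,f_{d+1}⟩`. -/
def PItem.Valid {NT TM Φ : Type} (x : PItem NT TM Φ) : Prop :=
  x.d ≤ x.r.rhs.length ∧ InHull x.r.f (x.d + 1) x.ρ

/-- `ρ` is the length-`2*(d+1)` prefix of the parameter sequence of the induced rule `q`. -/
def ParamsMatch {NT TM Φ : Type} (q : IndRule NT TM Φ) (d : ℕ) (ρ : List Φ) : Prop :=
  ρ.length = 2 * (d + 1) ∧ ρ[0]? = some q.inP ∧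
  (∀ i < d, ∃ X a b, q.rhs[i]? = some (X, a, b) ∧
      ρ[(2 * i + 1)]? = some a ∧ ρ[(2 * i + 2)]? = some b) ∧
  ((∃ X a b, q.rhs[d]? = some (X, a, b) ∧ ρ[(2 * d + 1)]? = some a) ∨
   (d = q.rhs.length ∧ q.fail = false ∧ ρ[(2 * d + 1)]? = some q.outP))

/-- The ordinary item `y` belongs to the induced item set `⟦x⟧` of the parameterized
item `x`. -/
def MemInduced {NT TM Φ : Type} (x : PItem NT TM Φ) (y : EItem NT TM Φ) : Prop :=
  InducedBy x.r y.rule ∧ y.d = x.d ∧ y.i = x.i ∧ y.j = x.j ∧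
  (y.rule.fail = true → x.d + 1 ≤ y.rule.rhs.length) ∧
  ParamsMatch y.rule x.d x.ρ

/-- Every parameterized item satisfying the hull invariant has a nonempty
induced item set `⟦x⟧`. -/
private lemma get?_of_prefix {Φ : Type} {ρ ρ' : List Φ} (h : ρ <+: ρ') {n : ℕ}
    (hn : n < ρ.length) : ρ'[n]? = ρ[n]? := by
  obtain ⟨t, rfl⟩ := h
  exact List.getElem?_append_left hn

private lemma inHull_step {Φ : Type} {f : ℕ → List Φ → Option Φ} {u : ℕ} {ρ : List Φ}
    (hρ : InHull f u ρ) {β α : Φ} (hf : f u (ρ ++ [β]) = some α) :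
    InHull f (u + 1) (ρ ++ [β, α]) := by
  obtain ⟨hlen, hvals⟩ := hρ
  constructor
  · simp [hlen]; omega
  · intro i hi
    rcases lt_or_eq_of_le (Nat.lt_succ_iff.mp hi) with hi' | rfl
    · have h1 : 2 * i + 1 < ρ.length := by omega
      rw [List.getElem?_append_left h1, List.take_append,
        Nat.sub_eq_zero_of_le (le_of_lt h1), List.take_zero, List.append_nil]
      exact hvals i hi'
    · have h1 : ρ.length ≤ 2 * i + 1 := by omega
      rw [List.getElem?_append_right h1, List.take_append,
        List.take_of_length_le (le_of_lt (by omega : ρ.length < 2 * i + 1))]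
      have e1 : 2 * i + 1 - ρ.length = 1 := by omega
      rw [e1]
      simp [hf]

private lemma hull_extend {Φ : Type} [Nonempty Φ] (f : ℕ → List Φ → Option Φ) (k : ℕ) :
    ∀ (n u : ℕ) (ρ : List Φ), k + 1 = u + n → InHull f u ρ →
      (∃ ρ', ρ <+: ρ' ∧ InHull f (k + 1) ρ') ∨
      (∃ h ρ' β, u ≤ h ∧ h ≤ k ∧ ρ <+: ρ' ∧ InHull f h ρ' ∧ f h (ρ' ++ [β]) = none)
  | 0, u, ρ, hn, hρ => Or.inl ⟨ρ, List.prefix_refl _, by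
      rw [show k + 1 = u by omega]; exact hρ⟩
  | n+1, u, ρ, hn, hρ => by
    have β : Φ := Classical.arbitrary Φ
    cases hf : f u (ρ ++ [β]) with
    | none => exact Or.inr ⟨u, ρ, β, le_refl _, by omega, List.prefix_refl _, hρ, hf⟩
    | some α =>
      rcases hull_extend f k n (u+1) (ρ ++ [β, α]) (by omega) (inHull_step hρ hf) with
        ⟨ρ', hp, hh⟩ | ⟨h, ρ', β', h1, h2, hp, hh, hfl⟩
      · exact Or.inl ⟨ρ', (List.prefix_append _ _).trans hp, hh⟩
      · exact Or.inr ⟨h, ρ', β', by omega, h2, (List.prefix_append _ _).trans hp, hh, hfl⟩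

theorem induced_items_nonempty {NT TM Φ : Type} [Nonempty Φ]
    (x : PItem NT TM Φ) (hx : x.Valid) :
    ∃ y : EItem NT TM Φ, MemInduced x y := by
  obtain ⟨hd, hρ⟩ := hx
  have φ0 : Φ := Classical.arbitrary Φ
  have hxlen : x.ρ.length = 2 * (x.d + 1) := hρ.1
  rcases hull_extend x.r.f x.r.rhs.length (x.r.rhs.length + 1 - (x.d + 1)) (x.d + 1) x.ρ
      (by omega) hρ with
    ⟨ρ', hpre, hhull⟩ | ⟨h, ρ', β, hh1, hh2, hpre, hhull, hfail⟩
  · -- success case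
    have hlen : ρ'.length = 2 * (x.r.rhs.length + 1) := hhull.1
    set g : ℕ → Φ := fun n => (ρ'[n]?).getD φ0 with hgdef
    have hg : ∀ n, n < 2 * (x.r.rhs.length + 1) → ρ'[n]? = some (g n) := by
      intro n hn
      simp only [hgdef]
      rw [List.getElem?_eq_getElem (show n < ρ'.length by omega)]
      rfl
    have hxg : ∀ n, n < 2 * (x.d + 1) → x.ρ[n]? = some (g n) := by
      intro n hn
      rw [← get?_of_prefix hpre (by omega)]
      exact hg n (by omega)
    refine ⟨⟨⟨false, x.r.lhs, g 0, g (2 * x.r.rhs.length + 1),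
      List.ofFn (fun i : Fin x.r.rhs.length => (x.r.rhs.get i, g (2 * i + 1), g (2 * i + 2))),
      false⟩, x.d, x.i, x.j⟩, ?_, rfl, rfl, rfl, ?_, ?_⟩
    · refine ⟨rfl, rfl, Or.inl ⟨rfl, by simp, ρ', hhull, hg 0 (by omega),
        hg (2 * x.r.rhs.length + 1) (by omega), ?_⟩⟩
      intro i hi
      refine ⟨x.r.rhs.get ⟨i, hi⟩, g (2 * i + 1), g (2 * i + 2),
        List.getElem?_eq_getElem hi, hg _ (by omega), hg _ (by omega), ?_⟩
      rw [List.getElem?_ofFn]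
      rw [dif_pos hi]
    · intro hcon; simp at hcon
    · refine ⟨hxlen, hxg 0 (by omega), ?_, ?_⟩
      · intro i hi
        refine ⟨x.r.rhs.get ⟨i, by omega⟩, g (2 * i + 1), g (2 * i + 2), ?_,
          hxg _ (by omega), hxg _ (by omega)⟩
        rw [List.getElem?_ofFn]
        rw [dif_pos (show i < x.r.rhs.length by omega)]
      · rcases lt_or_eq_of_le hd with hdk | hdk
        · refine Or.inl ⟨x.r.rhs.get ⟨x.d, by omega⟩, g (2 * x.d + 1), g (2 * x.d + 2), ?_,
            hxg _ (by omega)⟩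
          rw [List.getElem?_ofFn]
          rw [dif_pos (show x.d < x.r.rhs.length by omega)]
        · refine Or.inr ⟨by simp [hdk], rfl, ?_⟩
          rw [hxg _ (by omega), hdk]
  · -- failure case
    have hlen : ρ'.length = 2 * h := hhull.1
    set g : ℕ → Φ := fun n => (ρ'[n]?).getD φ0 with hgdef
    have hg : ∀ n, n < 2 * h → ρ'[n]? = some (g n) := by
      intro n hn
      simp only [hgdef]
      rw [List.getElem?_eq_getElem (show n < ρ'.length by omega)]
      rfl
    have hxg : ∀ n, n < 2 * (x.d + 1) → x.ρ[n]? = some (g n) := by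
      intro n hn
      rw [← get?_of_prefix hpre (by omega)]
      have : x.ρ.length ≤ ρ'.length := hpre.length_le
      exact hg n (by omega)
    refine ⟨⟨⟨false, x.r.lhs, g 0, φ0,
      List.ofFn (fun i : Fin h => (x.r.rhs.get ⟨i.1, lt_of_lt_of_le i.2 hh2⟩,
        g (2 * i + 1), if i.1 + 1 = h then β else g (2 * i + 2))),
      true⟩, x.d, x.i, x.j⟩, ?_, rfl, rfl, rfl, ?_, ?_⟩
    · refine ⟨rfl, rfl, Or.inr ⟨rfl, h, by omega, hh2, by simp, ρ', hhull,
        hg 0 (by omega), ?_, ?_⟩⟩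
      · intro i hi
        refine ⟨x.r.rhs.get ⟨i, by omega⟩, g (2 * i + 1), g (2 * i + 2),
          List.getElem?_eq_getElem (by omega), hg _ (by omega), hg _ (by omega), ?_⟩
        rw [List.getElem?_ofFn]
        rw [dif_pos (show i < h by omega)]
        simp only [if_neg (show ¬ (i + 1 = h) by omega)]
      · refine ⟨x.r.rhs.get ⟨h - 1, by omega⟩, g (2 * h - 1), β,
          List.getElem?_eq_getElem (by omega), ?_, ?_, hfail⟩
        · have : 2 * (h - 1) + 1 = 2 * h - 1 := by omega
          rw [← this]
          exact hg _ (by omega)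
        · rw [List.getElem?_ofFn]
          rw [dif_pos (show h - 1 < h by omega)]
          simp only [if_pos (show h - 1 + 1 = h by omega)]
          rw [show 2 * (h - 1) + 1 = 2 * h - 1 from by omega]
    · intro _
      simpa using hh1
    · refine ⟨hxlen, hxg 0 (by omega), ?_, ?_⟩
      · intro i hi
        refine ⟨x.r.rhs.get ⟨i, by omega⟩, g (2 * i + 1), g (2 * i + 2), ?_,
          hxg _ (by omega), hxg _ (by omega)⟩
        rw [List.getElem?_ofFn]
        rw [dif_pos (show i < h by omega)]
        simp only [if_neg (show ¬ (i + 1 = h) by omega)]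
      · refine Or.inl ⟨x.r.rhs.get ⟨x.d, by omega⟩, g (2 * x.d + 1),
          if x.d + 1 = h then β else g (2 * x.d + 2), ?_, hxg _ (by omega)⟩
        rw [List.getElem?_ofFn]
        rw [dif_pos (show x.d < h by omega)]
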